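/- arXiv:2204.00326 — 2 statements merged into one kernel-verified Lean document; each statement's English description precedes it below -/
import Mathlib

section
/- Let A be an m × n matrix over ℂ of rank r, and let I : Fin r → Fin m and J : Fin r → Fin n be injective maps of row and column indices such that the r × r submatrix A[I, J] (with entries A (I i) (J j)) is invertible. Then A factors exactly through its cross: A = A[·, J] · A[I, J]⁻¹ · A[I, ·], where A[·, J] is the m × r matrix of the selected columns and A[I, ·] is the r × n matrix of the selected rows. -/
open Matrix

theorem cross_decomposition_exact
    (m n r : ℕ) (A : Matrix (Fin m) (Fin n) ℂ)
    (hrank : A.rank = r)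
    (I : Fin r → Fin m) (J : Fin r → Fin n)
    (hI : Function.Injective I) (hJ : Function.Injective J)
    (hpivot : IsUnit (A.submatrix I J)) :
    A = A.submatrix id J * (A.submatrix I J)⁻¹ * A.submatrix I id := by
  classical
  set M := A.submatrix id J with hM
  set P := A.submatrix I J with hP
  set N := A.submatrix I id with hN
  have hPdet : IsUnit P.det := (Matrix.isUnit_iff_isUnit_det P).mp hpivot
  -- M.mulVecLin is injective
  have hinj : Function.Injective M.mulVecLin := by
    rw [← LinearMap.ker_eq_bot, Submodule.eq_bot_iff]
    intro x hx
    have hMx : M.mulVec x = 0 := hx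
    have hPx : P.mulVec x = 0 := by
      ext k
      have := congrFun hMx (I k)
      simpa [Matrix.mulVec, dotProduct, hM, hP] using this
    exact Matrix.eq_zero_of_mulVec_eq_zero hPdet.ne_zero hPx
  -- range of M is contained in range of A
  have hAE : A * (1 : Matrix (Fin n) (Fin n) ℂ).submatrix id J = M := by
    ext i k
    simp [Matrix.mul_apply, Matrix.one_apply, hM]
  have hle : LinearMap.range M.mulVecLin ≤ LinearMap.range A.mulVecLin := by
    rintro y ⟨x, rfl⟩
    refine ⟨((1 : Matrix (Fin n) (Fin n) ℂ).submatrix id J).mulVec x, ?_⟩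
    rw [Matrix.mulVecLin_apply, Matrix.mulVecLin_apply, Matrix.mulVec_mulVec, hAE]
  have hfr : Module.finrank ℂ (LinearMap.range M.mulVecLin) = r := by
    rw [LinearMap.finrank_range_of_inj hinj]
    simp
  have hreq : LinearMap.range M.mulVecLin = LinearMap.range A.mulVecLin := by
    apply Submodule.eq_of_le_of_finrank_eq hle
    rw [hfr]
    exact hrank.symm
  -- get C with A = M * C
  have hC : ∀ j : Fin n, ∃ c : Fin r → ℂ, M.mulVec c = fun i => A i j := by
    intro j
    have : (fun i => A i j) ∈ LinearMap.range A.mulVecLin := by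
      refine ⟨Pi.single j 1, ?_⟩
      ext i
      simp [Matrix.mulVecLin_apply, Matrix.mulVec, dotProduct, Pi.single_apply]
    rw [← hreq] at this
    exact this
  choose c hc using hC
  set C : Matrix (Fin r) (Fin n) ℂ := fun k j => c j k with hCdef
  have hAMC : A = M * C := by
    ext i j
    have := congrFun (hc j) i
    rw [Matrix.mul_apply]
    simpa [Matrix.mul_apply, Matrix.mulVec, dotProduct, hCdef] using this.symm
  have hPC : P * C = N := by
    ext k j
    have := congrFun (congrFun (congrArg (fun B => B.submatrix I id) hAMC) k) j
    simpa [Matrix.mul_apply, hN, hP, hM] using this.symm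
  have hCeq : C = P⁻¹ * N := by
    rw [← hPC, ← Matrix.mul_assoc, Matrix.nonsing_inv_mul P hPdet, Matrix.one_mul]
  rw [hAMC, hCeq, Matrix.mul_assoc]
end

section
/- Let A be an m × n matrix over ℂ, and let I : Fin k → Fin m and J : Fin k → Fin n be injective maps such that the k × k submatrix A[I, J] is invertible. Define the cross approximation B := A[·, J] · A[I, J]⁻¹ · A[I, ·]. Then B agrees with A on the selected rows and columns: for every i in the range of I and every column index j, B i j = A i j, and for every row index i and every j in the range of J, B i j = A i j. -/
theorem cross_approximation_interpolates
    (m n k : ℕ) (A : Matrix (Fin m) (Fin n) ℂ)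
    (I : Fin k → Fin m) (J : Fin k → Fin n)
    (hI : Function.Injective I) (hJ : Function.Injective J)
    (hpivot : IsUnit (A.submatrix I J)) :
    (∀ i ∈ Set.range I, ∀ j,
        (A.submatrix id J * (A.submatrix I J)⁻¹ * A.submatrix I id) i j = A i j) ∧
    (∀ i, ∀ j ∈ Set.range J,
        (A.submatrix id J * (A.submatrix I J)⁻¹ * A.submatrix I id) i j = A i j) := by
  have hdet := (Matrix.isUnit_iff_isUnit_det _).mp hpivot
  have h1 : A.submatrix I J * (A.submatrix I J)⁻¹ = 1 := Matrix.mul_nonsing_inv _ hdet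
  have h2 : (A.submatrix I J)⁻¹ * A.submatrix I J = 1 := Matrix.nonsing_inv_mul _ hdet
  constructor
  · rintro i ⟨t, rfl⟩ j
    have key : (A.submatrix id J * (A.submatrix I J)⁻¹ * A.submatrix I id) (I t) j
        = (A.submatrix I J * (A.submatrix I J)⁻¹ * A.submatrix I id) t j := by
      simp [Matrix.mul_apply, Matrix.submatrix_apply]
    rw [key, h1, Matrix.one_mul]
    simp
  · rintro i j ⟨s, rfl⟩
    have key : (A.submatrix id J * (A.submatrix I J)⁻¹ * A.submatrix I id) i (J s)
        = (A.submatrix id J * ((A.submatrix I J)⁻¹ * A.submatrix I J)) i s := by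
      simp only [Matrix.mul_apply, Matrix.submatrix_apply, id, Finset.sum_mul,
        Finset.mul_sum, mul_assoc]
      rw [Finset.sum_comm]
    rw [key, h2, Matrix.mul_one]
    simp
end
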